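/- Define b₀ = (c₁c₂⋯c_{2h}) · c_{2h+1} · (c₁c₂⋯c_{2h})⁻¹ and ι = (c₁c₂⋯c_{2h+1}) · (c_{2h+1}c_{2h}⋯c₂c₁), and suppose that ι commutes with each c_j for 1 ≤ j ≤ 2h+1 and that ι² = 1. Then for every integer m with 1 ≤ m ≤ h−1, the positive word (c_{2m+2}c_{2m+3}⋯c_{2h}c_{2h+1}) · (c_{2m}c_{2m−1}⋯c₂c₁) · b₀ · (c_{2h+1}c_{2h}⋯c_{2m+2}) · (c₁c₂⋯c_{2m}) · c_{2m+1} equals ι. (This is the positive Dehn twist expression for the hyperelliptic involution obtained from the involution θ of the simple-case theorem by setting the vertical genus k = 0.) -/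

import Mathlib

/-- The ascending product `c a * c (a+1) * ⋯ * c b`. -/
def ascProd {G : Type*} [Group G] (c : ℕ → G) (a b : ℕ) : G :=
  ((List.range' a (b + 1 - a)).map c).prod

/-- The descending product `c b * c (b-1) * ⋯ * c a`. -/
def descProd {G : Type*} [Group G] (c : ℕ → G) (a b : ℕ) : G :=
  (((List.range' a (b + 1 - a)).reverse).map c).prod

section Aux

variable {G : Type*} [Group G]

lemma range'_split_aux (a k b : ℕ) (h1 : a ≤ k + 1) (h2 : k ≤ b) :
    List.range' a (b + 1 - a) = List.range' a (k + 1 - a) ++ List.range' (k + 1) (b - k) := by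
  have := @List.range'_append a (k + 1 - a) (b - k) 1
  rw [show a + 1 * (k + 1 - a) = k + 1 by omega,
    show k + 1 - a + (b - k) = b + 1 - a by omega] at this
  exact this.symm

lemma ascProd_split (c : ℕ → G) (a k k' b : ℕ) (hk' : k' = k + 1)
    (h1 : a ≤ k + 1) (h2 : k ≤ b) :
    ascProd c a b = ascProd c a k * ascProd c k' b := by
  subst hk'
  unfold ascProd
  rw [range'_split_aux a k b h1 h2, show b - k = b + 1 - (k + 1) by omega,
    List.map_append, List.prod_append]

lemma descProd_split (c : ℕ → G) (a k k' b : ℕ) (hk' : k' = k + 1)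
    (h1 : a ≤ k + 1) (h2 : k ≤ b) :
    descProd c a b = descProd c k' b * descProd c a k := by
  subst hk'
  unfold descProd
  rw [range'_split_aux a k b h1 h2, show b - k = b + 1 - (k + 1) by omega,
    List.reverse_append, List.map_append, List.prod_append]

lemma ascProd_single (c : ℕ → G) (a : ℕ) : ascProd c a a = c a := by
  simp [ascProd, List.range']

lemma descProd_single (c : ℕ → G) (a : ℕ) : descProd c a a = c a := by
  simp [descProd, List.range']

lemma ascProd_empty (c : ℕ → G) (a b : ℕ) (h : b + 1 ≤ a) : ascProd c a b = 1 := by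
  unfold ascProd
  rw [show b + 1 - a = 0 by omega]
  simp

lemma descProd_empty (c : ℕ → G) (a b : ℕ) (h : b + 1 ≤ a) : descProd c a b = 1 := by
  unfold descProd
  rw [show b + 1 - a = 0 by omega]
  simp

lemma commute_ascProd (c : ℕ → G) (x : G) (a b : ℕ)
    (H : ∀ j, a ≤ j → j ≤ b → Commute x (c j)) : Commute x (ascProd c a b) := by
  apply Commute.list_prod_right
  intro y hy
  simp only [List.mem_map, List.mem_range'_1] at hy
  obtain ⟨j, ⟨hj1, hj2⟩, rfl⟩ := hy
  exact H j hj1 (by omega)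

lemma commute_descProd (c : ℕ → G) (x : G) (a b : ℕ)
    (H : ∀ j, a ≤ j → j ≤ b → Commute x (c j)) : Commute x (descProd c a b) := by
  apply Commute.list_prod_right
  intro y hy
  simp only [List.mem_map, List.mem_reverse, List.mem_range'_1] at hy
  obtain ⟨j, ⟨hj1, hj2⟩, rfl⟩ := hy
  exact H j hj1 (by omega)

/-- Conjugation by the full ascending word shifts generators up by one. -/
lemma shift_lemma (h : ℕ) (c : ℕ → G)
    (braid : ∀ j, 1 ≤ j → j ≤ 2 * h → c j * c (j + 1) * c j = c (j + 1) * c j * c (j + 1))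
    (comm : ∀ j l, 1 ≤ j → j ≤ 2 * h + 1 → 1 ≤ l → l ≤ 2 * h + 1 →
      (j + 2 ≤ l ∨ l + 2 ≤ j) → c j * c l = c l * c j)
    (j : ℕ) (hj1 : 1 ≤ j) (hj2 : j ≤ 2 * h) :
    ascProd c 1 (2 * h + 1) * c j = c (j + 1) * ascProd c 1 (2 * h + 1) := by
  obtain ⟨i, rfl⟩ : ∃ i, j = i + 1 := ⟨j - 1, by omega⟩
  have split1 : ascProd c 1 (2 * h + 1)
      = ascProd c 1 i * (c (i + 1) * c (i + 2)) * ascProd c (i + 3) (2 * h + 1) := by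
    rw [ascProd_split c 1 (i + 2) (i + 3) (2 * h + 1) rfl (by omega) (by omega),
      ascProd_split c 1 i (i + 1) (i + 2) rfl (by omega) (by omega),
      ascProd_split c (i + 1) (i + 1) (i + 2) (i + 2) rfl (by omega) (by omega),
      ascProd_single, ascProd_single]
  have comm1 : Commute (c (i + 1)) (ascProd c (i + 3) (2 * h + 1)) := by
    apply commute_ascProd
    intro l hl1 hl2
    exact comm (i + 1) l (by omega) (by omega) (by omega) (by omega) (Or.inl (by omega))
  have comm2 : Commute (c (i + 2)) (ascProd c 1 i) := by
    apply commute_ascProd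
    intro l hl1 hl2
    exact comm (i + 2) l (by omega) (by omega) (by omega) (by omega) (Or.inr (by omega))
  have br : c (i + 1) * c (i + 2) * c (i + 1) = c (i + 2) * c (i + 1) * c (i + 2) :=
    braid (i + 1) (by omega) (by omega)
  calc ascProd c 1 (2 * h + 1) * c (i + 1)
      = ascProd c 1 i * (c (i + 1) * c (i + 2)) * ascProd c (i + 3) (2 * h + 1) * c (i + 1) := by
        rw [split1]
    _ = ascProd c 1 i * (c (i + 1) * c (i + 2)) * (c (i + 1) * ascProd c (i + 3) (2 * h + 1)) := by
        rw [mul_assoc, ← comm1.eq]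
    _ = ascProd c 1 i * (c (i + 1) * c (i + 2) * c (i + 1)) * ascProd c (i + 3) (2 * h + 1) := by
        simp only [mul_assoc]
    _ = ascProd c 1 i * (c (i + 2) * c (i + 1) * c (i + 2)) * ascProd c (i + 3) (2 * h + 1) := by
        rw [br]
    _ = c (i + 2) * (ascProd c 1 i * (c (i + 1) * c (i + 2)) * ascProd c (i + 3) (2 * h + 1)) := by
        simp only [← mul_assoc]
        rw [comm2.eq]
    _ = c (i + 2) * ascProd c 1 (2 * h + 1) := by rw [← split1]

lemma shiftDesc_lemma (h : ℕ) (c : ℕ → G)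
    (braid : ∀ j, 1 ≤ j → j ≤ 2 * h → c j * c (j + 1) * c j = c (j + 1) * c j * c (j + 1))
    (comm : ∀ j l, 1 ≤ j → j ≤ 2 * h + 1 → 1 ≤ l → l ≤ 2 * h + 1 →
      (j + 2 ≤ l ∨ l + 2 ≤ j) → c j * c l = c l * c j) :
    ∀ b, b ≤ 2 * h → ∀ a, 1 ≤ a →
      ascProd c 1 (2 * h + 1) * descProd c a b
        = descProd c (a + 1) (b + 1) * ascProd c 1 (2 * h + 1) := by
  intro b
  induction b with
  | zero =>
    intro _ a ha
    rw [descProd_empty c a 0 (by omega), descProd_empty c (a + 1) 1 (by omega),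
      mul_one, one_mul]
  | succ n ih =>
    intro hb a ha
    by_cases hc : a ≤ n + 1
    · have d1 : descProd c a (n + 1) = c (n + 1) * descProd c a n := by
        rw [descProd_split c a n (n + 1) (n + 1) rfl (by omega) (by omega), descProd_single]
      have d2 : descProd c (a + 1) (n + 2) = c (n + 2) * descProd c (a + 1) (n + 1) := by
        rw [descProd_split c (a + 1) (n + 1) (n + 2) (n + 2) rfl (by omega) (by omega),
          descProd_single]
      have sh := shift_lemma h c braid comm (n + 1) (by omega) (by omega)
      calc ascProd c 1 (2 * h + 1) * descProd c a (n + 1)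
          = (ascProd c 1 (2 * h + 1) * c (n + 1)) * descProd c a n := by
            rw [d1, mul_assoc]
        _ = c (n + 2) * (ascProd c 1 (2 * h + 1) * descProd c a n) := by
            rw [sh, mul_assoc]
        _ = c (n + 2) * (descProd c (a + 1) (n + 1) * ascProd c 1 (2 * h + 1)) := by
            rw [ih (by omega) a ha]
        _ = descProd c (a + 1) (n + 1 + 1) * ascProd c 1 (2 * h + 1) := by
            rw [show n + 1 + 1 = n + 2 from rfl, d2, mul_assoc]
    · rw [descProd_empty c a (n + 1) (by omega), descProd_empty c (a + 1) (n + 1 + 1) (by omega),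
        mul_one, one_mul]

end Aux

/-- with `b₀ = (c₁⋯c_{2h}) c_{2h+1} (c₁⋯c_{2h})⁻¹` and
`ι = (c₁⋯c_{2h+1})(c_{2h+1}⋯c₁)` (which commutes with each `c_j` and satisfies `ι² = 1`),
for `1 ≤ m ≤ h-1` the positive word
`(c_{2m+2}⋯c_{2h+1})(c_{2m}⋯c₁) b₀ (c_{2h+1}⋯c_{2m+2})(c₁⋯c_{2m}) c_{2m+1}` equals `ι`. -/
theorem stmt5 {G : Type*} [Group G] (h : ℕ) (hh : 2 ≤ h) (c : ℕ → G)
    (braid : ∀ j, 1 ≤ j → j ≤ 2 * h → c j * c (j + 1) * c j = c (j + 1) * c j * c (j + 1))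
    (comm : ∀ j l, 1 ≤ j → j ≤ 2 * h + 1 → 1 ≤ l → l ≤ 2 * h + 1 →
      (j + 2 ≤ l ∨ l + 2 ≤ j) → c j * c l = c l * c j)
    (b₀ : G) (hb₀ : b₀ = ascProd c 1 (2 * h) * c (2 * h + 1) * (ascProd c 1 (2 * h))⁻¹)
    (ι : G) (hι : ι = ascProd c 1 (2 * h + 1) * descProd c 1 (2 * h + 1))
    (hcomm : ∀ j, 1 ≤ j → j ≤ 2 * h + 1 → ι * c j = c j * ι)
    (hsq : ι ^ 2 = 1) :
    ∀ m, 1 ≤ m → m ≤ h - 1 →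
      ascProd c (2 * m + 2) (2 * h + 1) * descProd c 1 (2 * m) * b₀ *
          descProd c (2 * m + 2) (2 * h + 1) * ascProd c 1 (2 * m) * c (2 * m + 1) = ι := by
  intro m hm1 hm2
  have hmh : m + 1 ≤ h := by omega
  -- basic decompositions
  have hΔ : ascProd c 1 (2 * h + 1) = ascProd c 1 (2 * h) * c (2 * h + 1) := by
    rw [ascProd_split c 1 (2 * h) (2 * h + 1) (2 * h + 1) rfl (by omega) (by omega),
      ascProd_single]
  have hd1 : descProd c 1 (2 * h + 1) = c (2 * h + 1) * descProd c 1 (2 * h) := by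
    rw [descProd_split c 1 (2 * h) (2 * h + 1) (2 * h + 1) rfl (by omega) (by omega),
      descProd_single]
  -- b₀ in terms of ι
  have hb : b₀ = ι * (ascProd c 1 (2 * h + 1) * descProd c 1 (2 * h))⁻¹ := by
    rw [hι, hd1, hΔ, hb₀]
    group
  -- the key braid-relation identity
  have s1 : ascProd c 1 (2 * m) * c (2 * m + 1) = ascProd c 1 (2 * m + 1) := by
    rw [ascProd_split c 1 (2 * m) (2 * m + 1) (2 * m + 1) rfl (by omega) (by omega),
      ascProd_single]
  have s2 : ascProd c 1 (2 * m + 1) * ascProd c (2 * m + 2) (2 * h + 1)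
      = ascProd c 1 (2 * h + 1) :=
    (ascProd_split c 1 (2 * m + 1) (2 * m + 2) (2 * h + 1) rfl (by omega) (by omega)).symm
  have s3 : ascProd c 1 (2 * h + 1) * descProd c (2 * m + 1) (2 * h)
      = descProd c (2 * m + 2) (2 * h + 1) * ascProd c 1 (2 * h + 1) := by
    have := shiftDesc_lemma h c braid comm (2 * h) (by omega) (2 * m + 1) (by omega)
    rwa [show 2 * m + 1 + 1 = 2 * m + 2 from rfl] at this
  have s4 : descProd c (2 * m + 1) (2 * h) * descProd c 1 (2 * m) = descProd c 1 (2 * h) :=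
    (descProd_split c 1 (2 * m) (2 * m + 1) (2 * h) rfl (by omega) (by omega)).symm
  have keyX : ascProd c 1 (2 * h + 1) * descProd c 1 (2 * h)
      = descProd c (2 * m + 2) (2 * h + 1) * ascProd c 1 (2 * m) * c (2 * m + 1) *
          ascProd c (2 * m + 2) (2 * h + 1) * descProd c 1 (2 * m) := by
    calc ascProd c 1 (2 * h + 1) * descProd c 1 (2 * h)
        = ascProd c 1 (2 * h + 1) * (descProd c (2 * m + 1) (2 * h) * descProd c 1 (2 * m)) := by
          rw [s4]
      _ = (ascProd c 1 (2 * h + 1) * descProd c (2 * m + 1) (2 * h)) * descProd c 1 (2 * m) := by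
          rw [mul_assoc]
      _ = (descProd c (2 * m + 2) (2 * h + 1) * ascProd c 1 (2 * h + 1)) *
            descProd c 1 (2 * m) := by rw [s3]
      _ = (descProd c (2 * m + 2) (2 * h + 1) *
            (ascProd c 1 (2 * m + 1) * ascProd c (2 * m + 2) (2 * h + 1))) *
            descProd c 1 (2 * m) := by rw [s2]
      _ = (descProd c (2 * m + 2) (2 * h + 1) *
            (ascProd c 1 (2 * m) * c (2 * m + 1) * ascProd c (2 * m + 2) (2 * h + 1))) *
            descProd c 1 (2 * m) := by rw [s1]
      _ = descProd c (2 * m + 2) (2 * h + 1) * ascProd c 1 (2 * m) * c (2 * m + 1) *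
            ascProd c (2 * m + 2) (2 * h + 1) * descProd c 1 (2 * m) := by
          simp only [mul_assoc]
  -- ι commutes with the relevant products
  have cU : Commute ι (ascProd c (2 * m + 2) (2 * h + 1)) := by
    apply commute_ascProd
    intro j hj1 hj2
    exact hcomm j (by omega) (by omega)
  have cD : Commute ι (descProd c 1 (2 * m)) := by
    apply commute_descProd
    intro j hj1 hj2
    exact hcomm j hj1 (by omega)
  have cUD : Commute (ascProd c (2 * m + 2) (2 * h + 1) * descProd c 1 (2 * m)) ι :=
    (cU.mul_right cD).symm
  rw [hb, keyX]
  have E : ascProd c (2 * m + 2) (2 * h + 1) * descProd c 1 (2 * m) *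
      (ι * (descProd c (2 * m + 2) (2 * h + 1) * ascProd c 1 (2 * m) * c (2 * m + 1) *
        ascProd c (2 * m + 2) (2 * h + 1) * descProd c 1 (2 * m))⁻¹) *
      descProd c (2 * m + 2) (2 * h + 1) * ascProd c 1 (2 * m) * c (2 * m + 1)
      = (ascProd c (2 * m + 2) (2 * h + 1) * descProd c 1 (2 * m)) * ι *
        (ascProd c (2 * m + 2) (2 * h + 1) * descProd c 1 (2 * m))⁻¹ := by
    group
  rw [E, cUD.eq]
  group
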